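/- arXiv:1710.11221 — 5 statements merged into one kernel-verified Lean document; each statement's English description precedes it below -/
import Mathlib

section
/- For integers n ≥ 1 and 1 ≤ k ≤ n, the number of admissible tuples of length n with center k equals the binomial coefficient C(n+1, k) = (n+1)! / ((n+1−k)! · k!). -/
/-- A tuple `(s 1, …, s m)` (encoded as a list of naturals, with `s (l+1)` the
entry `s.getD l 0`) is *admissible with center `i`* (1-indexed) if:
`s l ≤ s (l+1) ≤ s l + 1` for `1 ≤ l < i`;
`s l ≥ s (l+1) ≥ s l - 1` for `i ≤ l < m`; and `s 1 ≤ 1`, `s m ≤ 1`. -/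
def AdmissibleCenter (i : ℕ) (s : List ℕ) : Prop :=
  (∀ l, 1 ≤ l → l < i →
    s.getD (l - 1) 0 ≤ s.getD l 0 ∧ s.getD l 0 ≤ s.getD (l - 1) 0 + 1) ∧
  (∀ l, i ≤ l → l < s.length →
    s.getD l 0 ≤ s.getD (l - 1) 0 ∧ s.getD (l - 1) 0 - 1 ≤ s.getD l 0) ∧
  s.getD 0 0 ≤ 1 ∧ s.getD (s.length - 1) 0 ≤ 1


namespace AdmAux

/-- value of the extended path: `t 0 = 0`, `t l = s (l-1)` -/
def tval (s : List ℕ) (l : ℕ) : ℕ := if l = 0 then 0 else s.getD (l-1) 0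

/-- step `l` is "marked": not-up in the first `k` steps, down afterwards -/
def stepMem (k : ℕ) (s : List ℕ) (l : ℕ) : Prop :=
  (l < k ∧ tval s (l+1) = tval s l) ∨ (¬ l < k ∧ tval s (l+1) < tval s l)

instance (k : ℕ) (s : List ℕ) : DecidablePred (stepMem k s) := fun _ => by
  unfold stepMem; infer_instance

/-- counting marked steps below `l` -/
def cnt (p : ℕ → Prop) [DecidablePred p] (l : ℕ) : ℕ := ((Finset.range l).filter p).card

lemma cnt_succ (p : ℕ → Prop) [DecidablePred p] (l : ℕ) :
    cnt p (l+1) = cnt p l + if p l then 1 else 0 := by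
  unfold cnt
  rw [Finset.range_add_one, Finset.filter_insert]
  by_cases h : p l
  · rw [if_pos h, if_pos h, Finset.card_insert_of_notMem (by simp)]
  · rw [if_neg h, if_neg h, Nat.add_zero]

lemma cnt_mono (p : ℕ → Prop) [DecidablePred p] {a b : ℕ} (h : a ≤ b) : cnt p a ≤ cnt p b := by
  exact Finset.card_le_card (Finset.filter_subset_filter _ (Finset.range_subset_range.2 h))

lemma cnt_fin (p : ℕ → Prop) [DecidablePred p] (n : ℕ) :
    cnt p (n+1) = (Finset.univ.filter (fun i : Fin (n+1) => p i)).card := by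
  unfold cnt
  rw [show Finset.range (n+1) = Finset.map Fin.valEmbedding Finset.univ from by
    rw [Fin.map_valEmbedding_univ, Nat.Iio_eq_range], Finset.filter_map, Finset.card_map]
  rfl



variable {n k : ℕ} {s : List ℕ}

lemma tval_succ (s : List ℕ) (l : ℕ) : tval s (l+1) = s.getD l 0 := by
  simp [tval]

lemma step_up (hadm : AdmissibleCenter k s) {l : ℕ} (hl : l < k) :
    tval s (l+1) = tval s l ∨ tval s (l+1) = tval s l + 1 := by
  rcases Nat.eq_zero_or_pos l with rfl | hpos
  · have h1 : s.getD 0 0 ≤ 1 := hadm.2.2.1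
    rw [tval_succ]
    have h2 : tval s 0 = 0 := by simp [tval]
    omega
  · have h := hadm.1 l hpos hl
    rw [tval_succ, show tval s l = s.getD (l-1) 0 from by simp [tval]; omega]
    omega

lemma step_down (hlen : s.length = n) (hadm : AdmissibleCenter k s) (hk : 1 ≤ k)
    {l : ℕ} (hl : k ≤ l) (hln : l ≤ n) :
    tval s (l+1) = tval s l ∨ tval s (l+1) + 1 = tval s l := by
  have hl1 : 1 ≤ l := le_trans hk hl
  have htl : tval s l = s.getD (l-1) 0 := by simp [tval]; omega
  rcases eq_or_lt_of_le hln with rfl | hlt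
  · have h1 : s.getD (s.length - 1) 0 ≤ 1 := hadm.2.2.2
    rw [hlen] at h1
    have h0 : s.getD l 0 = 0 := List.getD_eq_default _ _ (by omega)
    rw [tval_succ, h0, htl]
    omega
  · have h := hadm.2.1 l hl (by omega)
    rw [tval_succ, htl]
    omega

lemma inv1 (hadm : AdmissibleCenter k s) :
    ∀ l ≤ k, tval s l + cnt (stepMem k s) l = l := by
  intro l
  induction l with
  | zero => intro _; simp [tval, cnt]
  | succ l ih =>
    intro hlk
    have hl : l < k := by omega
    rw [cnt_succ]
    rcases step_up hadm hl with h | h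
    · rw [if_pos (show stepMem k s l from Or.inl ⟨hl, h⟩)]
      have := ih (le_of_lt hl); omega
    · rw [if_neg (show ¬ stepMem k s l from by rintro (⟨_, h2⟩ | ⟨h2, _⟩) <;> omega)]
      have := ih (le_of_lt hl); omega

lemma inv2 (hlen : s.length = n) (hadm : AdmissibleCenter k s) (hk : 1 ≤ k) :
    ∀ l, k ≤ l → l ≤ n + 1 → tval s l + cnt (stepMem k s) l = k := by
  intro l hkl hln
  induction l, hkl using Nat.le_induction with
  | base => exact inv1 hadm k le_rfl
  | succ l hkl ih =>
    have h1 := ih (by omega)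
    rw [cnt_succ]
    rcases step_down hlen hadm hk hkl (by omega) with h | h
    · rw [if_neg (show ¬ stepMem k s l from by rintro (⟨h2, _⟩ | ⟨_, h2⟩) <;> omega)]
      omega
    · rw [if_pos (show stepMem k s l from Or.inr ⟨by omega, by omega⟩)]
      omega

/-- the set of marked steps, as a finset of `Fin (n+1)` -/
def G (n k : ℕ) (s : List ℕ) : Finset (Fin (n+1)) :=
  Finset.univ.filter (fun l : Fin (n+1) => stepMem k s l)

lemma mem_G {l : Fin (n+1)} : l ∈ G n k s ↔ stepMem k s l := by simp [G]

lemma card_G (hlen : s.length = n) (hadm : AdmissibleCenter k s) (hk : 1 ≤ k) (hkn : k ≤ n) :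
    (G n k s).card = k := by
  have h := inv2 hlen hadm hk (n+1) (by omega) le_rfl
  have h0 : tval s (n+1) = 0 := by
    rw [tval_succ]; exact List.getD_eq_default _ _ (by omega)
  have h1 : cnt (stepMem k s) (n+1) = k := by omega
  unfold G
  rw [← cnt_fin (stepMem k s) n, h1]

lemma tval_eq_of_G_eq {s1 s2 : List ℕ}
    (hlen1 : s1.length = n) (hadm1 : AdmissibleCenter k s1)
    (hlen2 : s2.length = n) (hadm2 : AdmissibleCenter k s2)
    (hk : 1 ≤ k) (hkn : k ≤ n) (hG : G n k s1 = G n k s2) :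
    ∀ l, tval s1 l = tval s2 l := by
  intro l
  induction l with
  | zero => simp [tval]
  | succ l ih =>
    by_cases hln : l ≤ n
    · have hm : stepMem k s1 l ↔ stepMem k s2 l := by
        have := Finset.ext_iff.1 hG ⟨l, by omega⟩
        rwa [mem_G, mem_G] at this
      unfold stepMem at hm
      by_cases hlk : l < k
      · rcases step_up hadm1 hlk with ha | ha <;>
          rcases step_up hadm2 hlk with hb | hb <;> omega
      · rcases step_down hlen1 hadm1 hk (by omega) hln with ha | ha <;>
          rcases step_down hlen2 hadm2 hk (by omega) hln with hb | hb <;> omega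
    · rw [tval_succ, tval_succ, List.getD_eq_default _ _ (by omega),
        List.getD_eq_default _ _ (by omega)]

lemma eq_of_G_eq {s1 s2 : List ℕ}
    (hlen1 : s1.length = n) (hadm1 : AdmissibleCenter k s1)
    (hlen2 : s2.length = n) (hadm2 : AdmissibleCenter k s2)
    (hk : 1 ≤ k) (hkn : k ≤ n) (hG : G n k s1 = G n k s2) : s1 = s2 := by
  apply List.ext_getElem (by omega)
  intro i h1 h2
  have ht := tval_eq_of_G_eq hlen1 hadm1 hlen2 hadm2 hk hkn hG (i+1)
  rw [tval_succ, tval_succ, List.getD_eq_getElem _ _ h1, List.getD_eq_getElem _ _ h2] at ht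
  exact ht

/-- membership predicate of a finset of `Fin (n+1)`, as a predicate on `ℕ` -/
def inS {n : ℕ} (S : Finset (Fin (n+1))) (m : ℕ) : Prop := ∃ i ∈ S, (i : ℕ) = m

instance {n : ℕ} (S : Finset (Fin (n+1))) : DecidablePred (inS S) := fun _ => by
  unfold inS; infer_instance

lemma cnt_inS {n : ℕ} (S : Finset (Fin (n+1))) : cnt (inS S) (n+1) = S.card := by
  unfold cnt
  rw [show (Finset.range (n+1)).filter (inS S) = S.image Fin.val from ?_]
  · exact Finset.card_image_of_injective _ Fin.val_injective
  · ext m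
    simp only [Finset.mem_filter, Finset.mem_range, Finset.mem_image, inS]
    constructor
    · rintro ⟨_, i, hi, rfl⟩; exact ⟨i, hi, rfl⟩
    · rintro ⟨i, hi, rfl⟩; exact ⟨i.isLt, i, hi, rfl⟩

/-- the canonical path values built from a marked-step predicate -/
def v (k : ℕ) (p : ℕ → Prop) [DecidablePred p] : ℕ → ℕ
  | 0 => 0
  | l+1 => if l < k then (if p l then v k p l else v k p l + 1)
           else (if p l then v k p l - 1 else v k p l)

section VLemmas

variable (k : ℕ) (p : ℕ → Prop) [DecidablePred p]

lemma v_succ_lt_pos {l : ℕ} (h1 : l < k) (h2 : p l) : v k p (l+1) = v k p l := by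
  simp [v, h1, h2]

lemma v_succ_lt_neg {l : ℕ} (h1 : l < k) (h2 : ¬ p l) : v k p (l+1) = v k p l + 1 := by
  simp [v, h1, h2]

lemma v_succ_ge_pos {l : ℕ} (h1 : ¬ l < k) (h2 : p l) : v k p (l+1) = v k p l - 1 := by
  simp [v, h1, h2]

lemma v_succ_ge_neg {l : ℕ} (h1 : ¬ l < k) (h2 : ¬ p l) : v k p (l+1) = v k p l := by
  simp [v, h1, h2]

lemma vinv1 : ∀ l ≤ k, v k p l + cnt p l = l := by
  intro l
  induction l with
  | zero => intro _; simp [v, cnt]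
  | succ l ih =>
    intro hlk
    have hl : l < k := by omega
    have h1 := ih (le_of_lt hl)
    rw [cnt_succ]
    by_cases h : p l
    · rw [v_succ_lt_pos k p hl h, if_pos h]; omega
    · rw [v_succ_lt_neg k p hl h, if_neg h]; omega

variable {m : ℕ} (hc : cnt p (m+1) = k)

include hc in
lemma vinv2 : ∀ l, k ≤ l → l ≤ m + 1 → v k p l + cnt p l = k := by
  intro l hkl hlm
  induction l, hkl using Nat.le_induction with
  | base => exact vinv1 k p k le_rfl
  | succ l hkl ih =>
    have h1 := ih (by omega)
    have h2 := cnt_succ p l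
    rw [h2]
    by_cases h : p l
    · have h3 : cnt p (l+1) ≤ cnt p (m+1) := cnt_mono p (by omega)
      rw [v_succ_ge_pos k p (by omega) h, if_pos h] at *
      omega
    · rw [v_succ_ge_neg k p (by omega) h, if_neg h]
      omega

include hc in
lemma v_pos (hkm : k ≤ m) {l : ℕ} (hkl : k ≤ l) (hlm : l ≤ m) (hp : p l) :
    1 ≤ v k p l := by
  have h1 := vinv2 k p hc l hkl (by omega)
  have h2 := cnt_succ p l
  have h3 : cnt p (l+1) ≤ cnt p (m+1) := cnt_mono p (by omega)
  rw [if_pos hp] at h2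
  omega

end VLemmas

lemma exists_admissible (hk : 1 ≤ k) (hkn : k ≤ n) (S : Finset (Fin (n+1)))
    (hS : S.card = k) :
    ∃ s : List ℕ, s.length = n ∧ AdmissibleCenter k s ∧ G n k s = S := by
  set p := inS S with hp
  have hc : cnt p (n+1) = k := (cnt_inS S).trans hS
  set s : List ℕ := List.ofFn (fun i : Fin n => v k p (i+1)) with hsdef
  have hlen : s.length = n := by rw [hsdef, List.length_ofFn]
  have ht : ∀ l ≤ n, tval s l = v k p l := by
    intro l hl
    rcases Nat.eq_zero_or_pos l with rfl | hpos
    · simp [tval, v]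
    · have h1 : l - 1 < s.length := by omega
      rw [show tval s l = s.getD (l-1) 0 from by
        unfold tval; rw [if_neg (show ¬ l = 0 by omega)], hsdef,
        List.getD_eq_getElem _ _ (by simpa using (by omega : l - 1 < n)),
        List.getElem_ofFn]
      congr 1
      simp only [Fin.val_mk]
      omega
  have hvtop : v k p (n+1) = 0 := by
    have := vinv2 k p hc (n+1) (by omega) le_rfl
    omega
  have httop : tval s (n+1) = 0 := by
    rw [tval_succ]; exact List.getD_eq_default _ _ (by omega)
  have ht' : ∀ l ≤ n + 1, tval s l = v k p l := by
    intro l hl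
    rcases Nat.lt_or_ge l (n+1) with h | h
    · exact ht l (by omega)
    · have : l = n + 1 := by omega
      rw [this, httop, hvtop]
  have hvn : v k p n ≤ 1 := by
    have h1 := vinv2 k p hc n hkn (by omega)
    have h2 := cnt_succ p n
    have h3 : cnt p n ≤ cnt p (n+1) := cnt_mono p (by omega)
    split at h2 <;> omega
  have hadm : AdmissibleCenter k s := by
    refine ⟨?_, ?_, ?_, ?_⟩
    · intro l h1 hlk
      have e1 : s.getD (l-1) 0 = v k p l := by
        rw [← ht l (by omega), tval, if_neg (show ¬ l = 0 by omega)]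
      have e2 : s.getD l 0 = v k p (l+1) := by
        rw [← ht (l+1) (by omega), tval_succ]
      rw [e1, e2]
      by_cases h : p l
      · rw [v_succ_lt_pos k p hlk h]; omega
      · rw [v_succ_lt_neg k p hlk h]; omega
    · intro l hkl hls
      rw [hlen] at hls
      have h1 : 1 ≤ l := by omega
      have e1 : s.getD (l-1) 0 = v k p l := by
        rw [← ht l (by omega), tval, if_neg (show ¬ l = 0 by omega)]
      have e2 : s.getD l 0 = v k p (l+1) := by
        rw [← ht (l+1) (by omega), tval_succ]
      rw [e1, e2]
      by_cases h : p l
      · rw [v_succ_ge_pos k p (by omega) h]; omega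
      · rw [v_succ_ge_neg k p (by omega) h]; omega
    · have e1 : s.getD 0 0 = v k p 1 := by rw [← ht 1 (by omega), tval_succ]
      rw [e1]
      by_cases h : p 0
      · rw [v_succ_lt_pos k p (by omega) h]; simp [v]
      · rw [v_succ_lt_neg k p (by omega) h]; simp [v]
    · have e1 : s.getD (s.length - 1) 0 = v k p n := by
        rw [hlen, ← ht n (by omega), tval, if_neg (show ¬ n = 0 by omega)]
      rw [e1]; exact hvn
  refine ⟨s, hlen, hadm, ?_⟩
  ext l
  rw [mem_G]
  have hln : (l : ℕ) ≤ n := by omega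
  have e1 : tval s (l : ℕ) = v k p l := ht' _ (by omega)
  have e2 : tval s ((l : ℕ)+1) = v k p ((l:ℕ)+1) := ht' _ (by omega)
  have hmem : p (l : ℕ) ↔ l ∈ S := by
    show inS S (l : ℕ) ↔ l ∈ S
    simp [inS, Fin.val_inj]
  rw [← hmem]
  unfold stepMem
  rw [e1, e2]
  by_cases hlk : (l : ℕ) < k
  · by_cases h : p (l : ℕ)
    · rw [v_succ_lt_pos k p hlk h]
      simp [hlk, h]
    · rw [v_succ_lt_neg k p hlk h]
      simp [hlk, h]
  · by_cases h : p (l : ℕ)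
    · have hpos := v_pos k p hc hkn (by omega) hln h
      rw [v_succ_ge_pos k p hlk h]
      constructor
      · intro _; exact h
      · intro _; exact Or.inr ⟨hlk, by omega⟩
    · rw [v_succ_ge_neg k p hlk h]
      constructor
      · rintro (⟨h2, _⟩ | ⟨_, h2⟩)
        · omega
        · omega
      · intro h2; exact absurd h2 h

end AdmAux

/-- Lemma 4.5: the number of admissible tuples of length `n` with center `k`
is the binomial coefficient `C(n+1, k)`. -/
theorem card_admissible_tuples (n k : ℕ) (hn : 1 ≤ n) (hk : 1 ≤ k) (hkn : k ≤ n) :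
    {s : List ℕ | s.length = n ∧ AdmissibleCenter k s}.ncard = Nat.choose (n + 1) k := by
  classical
  have hinj : Set.InjOn (AdmAux.G n k) {s : List ℕ | s.length = n ∧ AdmissibleCenter k s} :=
    fun s1 h1 s2 h2 hG => AdmAux.eq_of_G_eq h1.1 h1.2 h2.1 h2.2 hk hkn hG
  have himg : AdmAux.G n k '' {s : List ℕ | s.length = n ∧ AdmissibleCenter k s}
      = ↑(Finset.powersetCard k (Finset.univ : Finset (Fin (n+1)))) := by
    ext S
    simp only [Set.mem_image, Set.mem_setOf_eq, Finset.mem_coe,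
      Finset.mem_powersetCard_univ]
    constructor
    · rintro ⟨s, ⟨hlen, hadm⟩, rfl⟩
      exact AdmAux.card_G hlen hadm hk hkn
    · intro hS
      obtain ⟨s, hlen, hadm, hGs⟩ := AdmAux.exists_admissible hk hkn S hS
      exact ⟨s, ⟨hlen, hadm⟩, hGs⟩
  rw [← Set.ncard_image_of_injOn hinj, himg, Set.ncard_coe_finset,
    Finset.card_powersetCard, Finset.card_univ, Fintype.card_fin]
end

section
/- For integers n ≥ 4 and 2 ≤ k ≤ n−1, the number of admissible tuples (s_1, …, s_n) of length n with center k satisfying s_1 = 0, s_2 = 1, s_{n−1} = 1 and s_n = 0 equals the binomial coefficient C(n−3, k−2). -/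
namespace AdmissibleAux

/-- The value at 0-based position `i` of the tuple encoded by the subset `S`. -/
def fval (n k : ℕ) (S : Finset ℕ) (i : ℕ) : ℕ :=
  if i = 0 ∨ i = n - 1 then 0
  else if i ≤ k - 1 then 1 + ((Finset.Ico 1 i) \ S).card
  else 1 + (S ∩ Finset.Ico i (n - 2)).card

/-- The list encoded by the subset `S`. -/
def Fmap (n k : ℕ) (S : Finset ℕ) : List ℕ := (List.range n).map (fval n k S)

open Classical in
/-- The subset recovered from a list. -/
noncomputable def Gmap (n k : ℕ) (s : List ℕ) : Finset ℕ :=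
  (Finset.Ico 1 (n - 2)).filter (fun t =>
    if t ≤ k - 2 then s.getD (t + 1) 0 = s.getD t 0 else s.getD (t + 1) 0 < s.getD t 0)

variable {n k : ℕ} {S : Finset ℕ} {s : List ℕ}

lemma Gmap_subset : Gmap n k s ⊆ Finset.Ico 1 (n - 2) := Finset.filter_subset _ _

lemma mem_Gmap_asc {t : ℕ} (ht1 : 1 ≤ t) (htn : t < n - 2) (htk : t ≤ k - 2) :
    t ∈ Gmap n k s ↔ s.getD (t + 1) 0 = s.getD t 0 := by
  unfold Gmap
  rw [Finset.mem_filter, Finset.mem_Ico, if_pos htk]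
  exact ⟨fun h => h.2, fun h => ⟨⟨ht1, htn⟩, h⟩⟩

lemma mem_Gmap_desc {t : ℕ} (ht1 : 1 ≤ t) (htn : t < n - 2) (htk : ¬ t ≤ k - 2) :
    t ∈ Gmap n k s ↔ s.getD (t + 1) 0 < s.getD t 0 := by
  unfold Gmap
  rw [Finset.mem_filter, Finset.mem_Ico, if_neg htk]
  exact ⟨fun h => h.2, fun h => ⟨⟨ht1, htn⟩, h⟩⟩

lemma Fmap_length : (Fmap n k S).length = n := by simp [Fmap]

lemma Fmap_getD {i : ℕ} (hi : i < n) : (Fmap n k S).getD i 0 = fval n k S i := by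
  rw [List.getD_eq_getElem _ _ (by simpa [Fmap] using hi)]
  simp [Fmap]

lemma fval_zero : fval n k S 0 = 0 := by unfold fval; rw [if_pos (Or.inl rfl)]

lemma fval_last : fval n k S (n - 1) = 0 := by unfold fval; rw [if_pos (Or.inr rfl)]

lemma fval_asc (hn : 4 ≤ n) (hkn : k ≤ n - 1) {i : ℕ} (hi1 : 1 ≤ i) (hik : i ≤ k - 1) :
    fval n k S i = 1 + ((Finset.Ico 1 i) \ S).card := by
  unfold fval
  rw [if_neg (by omega), if_pos hik]

/-- The two counting identities relating the ascending and descending parts. -/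
lemma key_counts (hn : 4 ≤ n) (hk : 2 ≤ k) (hkn : k ≤ n - 1)
    (hSsub : S ⊆ Finset.Ico 1 (n - 2)) :
    (S ∩ Finset.Ico 1 (k - 1)).card + (S ∩ Finset.Ico (k - 1) (n - 2)).card = S.card ∧
    (Finset.Ico 1 (k - 1) ∩ S).card + ((Finset.Ico 1 (k - 1)) \ S).card = k - 2 := by
  constructor
  · have hsplit : Finset.Ico 1 (k - 1) ∪ Finset.Ico (k - 1) (n - 2) = Finset.Ico 1 (n - 2) :=
      Finset.Ico_union_Ico_eq_Ico (by omega) (by omega)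
    have hdisj : Disjoint (S ∩ Finset.Ico 1 (k - 1)) (S ∩ Finset.Ico (k - 1) (n - 2)) :=
      Disjoint.mono Finset.inter_subset_right Finset.inter_subset_right
        (Finset.Ico_disjoint_Ico_consecutive 1 (k - 1) (n - 2))
    rw [← Finset.card_union_of_disjoint hdisj, ← Finset.inter_union_distrib_left, hsplit,
      Finset.inter_eq_left.mpr hSsub]
  · rw [Finset.card_inter_add_card_sdiff, Nat.card_Ico]
    omega

lemma bridge (hn : 4 ≤ n) (hk : 2 ≤ k) (hkn : k ≤ n - 1)
    (hSsub : S ⊆ Finset.Ico 1 (n - 2)) (hScard : S.card = k - 2) :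
    ((Finset.Ico 1 (k - 1)) \ S).card = (S ∩ Finset.Ico (k - 1) (n - 2)).card := by
  obtain ⟨hc1, hc2⟩ := key_counts hn hk hkn hSsub
  rw [Finset.inter_comm] at hc2
  omega

lemma fval_desc (hn : 4 ≤ n) (hk : 2 ≤ k) (hkn : k ≤ n - 1)
    (hSsub : S ⊆ Finset.Ico 1 (n - 2)) (hScard : S.card = k - 2)
    {i : ℕ} (hki : k - 1 ≤ i) (hin : i ≤ n - 2) :
    fval n k S i = 1 + (S ∩ Finset.Ico i (n - 2)).card := by
  by_cases h : i ≤ k - 1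
  · have hik : i = k - 1 := le_antisymm h hki
    subst hik
    rw [fval_asc hn hkn (by omega) le_rfl, bridge hn hk hkn hSsub hScard]
  · unfold fval
    rw [if_neg (by omega), if_neg h]

lemma fval_asc_step (hn : 4 ≤ n) (hk : 2 ≤ k) (hkn : k ≤ n - 1)
    {t : ℕ} (ht1 : 1 ≤ t) (htk : t ≤ k - 2) :
    fval n k S (t + 1) = fval n k S t + (if t ∈ S then 0 else 1) := by
  rw [fval_asc hn hkn (by omega) (by omega), fval_asc hn hkn ht1 (by omega),
    Nat.Ico_succ_right_eq_insert_Ico ht1]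
  by_cases h : t ∈ S
  · rw [Finset.insert_sdiff_of_mem _ h, if_pos h]
    omega
  · rw [Finset.insert_sdiff_of_notMem _ h, if_neg h,
      Finset.card_insert_of_notMem (by simp [Finset.mem_sdiff])]
    omega

lemma fval_desc_step (hn : 4 ≤ n) (hk : 2 ≤ k) (hkn : k ≤ n - 1)
    (hSsub : S ⊆ Finset.Ico 1 (n - 2)) (hScard : S.card = k - 2)
    {t : ℕ} (htk : k - 1 ≤ t) (htn : t ≤ n - 3) :
    fval n k S t = fval n k S (t + 1) + (if t ∈ S then 1 else 0) := by
  rw [fval_desc hn hk hkn hSsub hScard htk (by omega),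
    fval_desc hn hk hkn hSsub hScard (by omega) (by omega),
    ← Finset.insert_Ico_add_one_left_eq_Ico (show t < n - 2 by omega)]
  by_cases h : t ∈ S
  · rw [Finset.inter_insert_of_mem h, if_pos h,
      Finset.card_insert_of_notMem (by simp [Finset.mem_Ico])]
    omega
  · rw [Finset.inter_insert_of_notMem h, if_neg h]
    omega

lemma fval_one (hn : 4 ≤ n) (hk : 2 ≤ k) (hkn : k ≤ n - 1) : fval n k S 1 = 1 := by
  rw [fval_asc hn hkn le_rfl (by omega)]
  simp

lemma fval_penult (hn : 4 ≤ n) (hk : 2 ≤ k) (hkn : k ≤ n - 1)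
    (hSsub : S ⊆ Finset.Ico 1 (n - 2)) (hScard : S.card = k - 2) :
    fval n k S (n - 2) = 1 := by
  rw [fval_desc hn hk hkn hSsub hScard (by omega) le_rfl]
  simp

/-- The image of `Fmap` lands in the target set. -/
lemma Fmap_mem (hn : 4 ≤ n) (hk : 2 ≤ k) (hkn : k ≤ n - 1)
    (hSsub : S ⊆ Finset.Ico 1 (n - 2)) (hScard : S.card = k - 2) :
    (Fmap n k S).length = n ∧ AdmissibleCenter k (Fmap n k S) ∧
      (Fmap n k S).getD 0 0 = 0 ∧ (Fmap n k S).getD 1 0 = 1 ∧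
      (Fmap n k S).getD (n - 2) 0 = 1 ∧ (Fmap n k S).getD (n - 1) 0 = 0 := by
  have hlen : (Fmap n k S).length = n := Fmap_length
  refine ⟨hlen, ⟨?_, ?_, ?_, ?_⟩, ?_, ?_, ?_, ?_⟩
  · intro l hl1 hlk
    rw [Fmap_getD (by omega), Fmap_getD (by omega)]
    rcases eq_or_lt_of_le hl1 with h1 | h1
    · rw [← h1]
      rw [show (1 : ℕ) - 1 = 0 from rfl, fval_zero, fval_one hn hk hkn]
      omega
    · have hstep := fval_asc_step hn hk hkn (S := S) (t := l - 1) (by omega) (by omega)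
      rw [show l - 1 + 1 = l by omega] at hstep
      split_ifs at hstep <;> omega
  · intro l hkl hln
    rw [hlen] at hln
    rw [Fmap_getD (by omega), Fmap_getD (by omega)]
    rcases eq_or_lt_of_le (show l ≤ n - 1 by omega) with h1 | h1
    · rw [h1, show n - 1 - 1 = n - 2 by omega, fval_last,
        fval_penult hn hk hkn hSsub hScard]
      omega
    · have hstep := fval_desc_step hn hk hkn hSsub hScard (S := S) (t := l - 1)
        (by omega) (by omega)
      rw [show l - 1 + 1 = l by omega] at hstep
      split_ifs at hstep <;> omega
  · rw [Fmap_getD (by omega), fval_zero]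
    omega
  · rw [hlen, Fmap_getD (by omega), fval_last]
    omega
  · rw [Fmap_getD (by omega), fval_zero]
  · rw [Fmap_getD (by omega), fval_one hn hk hkn]
  · rw [Fmap_getD (by omega), fval_penult hn hk hkn hSsub hScard]
  · rw [Fmap_getD (by omega), fval_last]

lemma s_asc (hn : 4 ≤ n) (hk : 2 ≤ k) (hkn : k ≤ n - 1)
    (hadm : AdmissibleCenter k s) (h1 : s.getD 1 0 = 1) :
    ∀ j, j + 1 ≤ k - 1 →
      s.getD (j + 1) 0 = 1 + ((Finset.Ico 1 (j + 1)) \ Gmap n k s).card := by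
  intro j
  induction j with
  | zero => intro _; simpa using h1
  | succ j ih =>
    intro hj
    have hIH := ih (by omega)
    have hadm1 := hadm.1 (j + 2) (by omega) (by omega)
    rw [show j + 2 - 1 = j + 1 from rfl] at hadm1
    have hmem : (j + 1) ∈ Gmap n k s ↔ s.getD (j + 2) 0 = s.getD (j + 1) 0 :=
      mem_Gmap_asc (by omega) (by omega) (by omega)
    rw [show j + 1 + 1 = j + 2 from rfl,
      Nat.Ico_succ_right_eq_insert_Ico (show 1 ≤ j + 1 by omega)]
    rcases eq_or_ne (s.getD (j + 2) 0) (s.getD (j + 1) 0) with h | h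
    · rw [h, Finset.insert_sdiff_of_mem _ (hmem.mpr h)]
      exact hIH
    · have hne : (j + 1) ∉ Gmap n k s := fun hc => h (hmem.mp hc)
      rw [Finset.insert_sdiff_of_notMem _ hne,
        Finset.card_insert_of_notMem (by simp [Finset.mem_sdiff])]
      omega

lemma s_desc (hn : 4 ≤ n) (hk : 2 ≤ k) (hkn : k ≤ n - 1)
    (hlen : s.length = n) (hadm : AdmissibleCenter k s) (hp : s.getD (n - 2) 0 = 1) :
    ∀ j, ∀ i, k - 1 ≤ i → i + j = n - 2 →
      s.getD i 0 = 1 + (Gmap n k s ∩ Finset.Ico i (n - 2)).card := by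
  intro j
  induction j with
  | zero =>
    intro i hki hij
    rw [show i = n - 2 by omega]
    simpa using hp
  | succ j ih =>
    intro i hki hij
    have hIH := ih (i + 1) (by omega) (by omega)
    have hadm2 := hadm.2.1 (i + 1) (by omega) (by omega)
    rw [show i + 1 - 1 = i from rfl] at hadm2
    have hmem : i ∈ Gmap n k s ↔ s.getD (i + 1) 0 < s.getD i 0 :=
      mem_Gmap_desc (by omega) (by omega) (by omega)
    rw [← Finset.insert_Ico_add_one_left_eq_Ico (show i < n - 2 by omega)]
    rcases eq_or_ne (s.getD (i + 1) 0) (s.getD i 0) with h | h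
    · have hne : i ∉ Gmap n k s := fun hc => absurd (hmem.mp hc) (by omega)
      rw [Finset.inter_insert_of_notMem hne, ← h]
      exact hIH
    · have hmm : i ∈ Gmap n k s := hmem.mpr (by omega)
      rw [Finset.inter_insert_of_mem hmm,
        Finset.card_insert_of_notMem (by simp [Finset.mem_Ico])]
      omega

lemma Gmap_card (hn : 4 ≤ n) (hk : 2 ≤ k) (hkn : k ≤ n - 1)
    (hlen : s.length = n) (hadm : AdmissibleCenter k s)
    (h1 : s.getD 1 0 = 1) (hp : s.getD (n - 2) 0 = 1) :
    (Gmap n k s).card = k - 2 := by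
  have ha := s_asc hn hk hkn hadm h1 (k - 2) (by omega)
  rw [show k - 2 + 1 = k - 1 by omega] at ha
  have hd := s_desc hn hk hkn hlen hadm hp (n - 2 - (k - 1)) (k - 1) le_rfl (by omega)
  obtain ⟨hc1, hc2⟩ := key_counts hn hk hkn (Gmap_subset (s := s) (k := k))
  rw [Finset.inter_comm] at hc2
  omega

lemma Fmap_Gmap (hn : 4 ≤ n) (hk : 2 ≤ k) (hkn : k ≤ n - 1)
    (hlen : s.length = n) (hadm : AdmissibleCenter k s)
    (h0 : s.getD 0 0 = 0) (h1 : s.getD 1 0 = 1)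
    (hp : s.getD (n - 2) 0 = 1) (hl : s.getD (n - 1) 0 = 0) :
    Fmap n k (Gmap n k s) = s := by
  have hGc := Gmap_card hn hk hkn hlen hadm h1 hp
  apply List.ext_getElem (by rw [Fmap_length, hlen])
  intro i hi1 hi2
  rw [hlen] at hi2
  have hF : (Fmap n k (Gmap n k s))[i] = fval n k (Gmap n k s) i := by simp [Fmap]
  have hs : s[i] = s.getD i 0 := (List.getD_eq_getElem s 0 (by omega)).symm
  rw [hF, hs]
  rcases Nat.eq_zero_or_pos i with h | h
  · rw [h, fval_zero, h0]
  rcases eq_or_lt_of_le (show i ≤ n - 1 by omega) with h' | h'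
  · rw [h', fval_last, hl]
  by_cases hik : i ≤ k - 1
  · rw [fval_asc hn hkn h hik]
    have := s_asc hn hk hkn hadm h1 (i - 1) (by omega)
    rw [show i - 1 + 1 = i by omega] at this
    omega
  · rw [fval_desc hn hk hkn Gmap_subset hGc (by omega) (by omega)]
    have := s_desc hn hk hkn hlen hadm hp (n - 2 - i) i (by omega) (by omega)
    omega

lemma Fmap_inj (hn : 4 ≤ n) (hk : 2 ≤ k) (hkn : k ≤ n - 1)
    {S S' : Finset ℕ}
    (hS : S ∈ (Finset.Ico 1 (n - 2)).powersetCard (k - 2))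
    (hS' : S' ∈ (Finset.Ico 1 (n - 2)).powersetCard (k - 2))
    (h : Fmap n k S = Fmap n k S') : S = S' := by
  obtain ⟨hSsub, hScard⟩ := Finset.mem_powersetCard.mp hS
  obtain ⟨hSsub', hScard'⟩ := Finset.mem_powersetCard.mp hS'
  have hv : ∀ i, i < n → fval n k S i = fval n k S' i := by
    intro i hi
    rw [← Fmap_getD hi, ← Fmap_getD hi, h]
  ext t
  by_cases ht : t ∈ Finset.Ico 1 (n - 2)
  · rw [Finset.mem_Ico] at ht
    have e1 := hv t (by omega)
    have e2 := hv (t + 1) (by omega)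
    by_cases htk : t ≤ k - 2
    · have s1 := fval_asc_step hn hk hkn (S := S) (t := t) ht.1 htk
      have s2 := fval_asc_step hn hk hkn (S := S') (t := t) ht.1 htk
      constructor <;> intro hm <;> by_contra hm'
      · rw [if_pos hm] at s1; rw [if_neg hm'] at s2; omega
      · rw [if_neg hm'] at s1; rw [if_pos hm] at s2; omega
    · have s1 := fval_desc_step hn hk hkn hSsub hScard (S := S) (t := t)
        (by omega) (by omega)
      have s2 := fval_desc_step hn hk hkn hSsub' hScard' (S := S') (t := t)
        (by omega) (by omega)
      constructor <;> intro hm <;> by_contra hm'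
      · rw [if_pos hm] at s1; rw [if_neg hm'] at s2; omega
      · rw [if_neg hm'] at s1; rw [if_pos hm] at s2; omega
  · constructor <;> intro hm
    · exact absurd (hSsub hm) ht
    · exact absurd (hSsub' hm) ht

end AdmissibleAux

open AdmissibleAux in
/-- For `n ≥ 4` and `2 ≤ k ≤ n-1`, the number of admissible tuples
`(s 1, …, s n)` of length `n` with center `k` satisfying
`s 1 = 0`, `s 2 = 1`, `s (n-1) = 1`, `s n = 0` is `C(n-3, k-2)`. -/
theorem card_admissible_tuples_boundary₁ (n k : ℕ) (hn : 4 ≤ n)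
    (hk : 2 ≤ k) (hkn : k ≤ n - 1) :
    {s : List ℕ | s.length = n ∧ AdmissibleCenter k s ∧
      s.getD 0 0 = 0 ∧ s.getD 1 0 = 1 ∧
      s.getD (n - 2) 0 = 1 ∧ s.getD (n - 1) 0 = 0}.ncard
      = Nat.choose (n - 3) (k - 2) := by
  classical
  have himg : {s : List ℕ | s.length = n ∧ AdmissibleCenter k s ∧
      s.getD 0 0 = 0 ∧ s.getD 1 0 = 1 ∧
      s.getD (n - 2) 0 = 1 ∧ s.getD (n - 1) 0 = 0}
      = Fmap n k '' ↑((Finset.Ico 1 (n - 2)).powersetCard (k - 2)) := by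
    ext s
    simp only [Set.mem_setOf_eq, Set.mem_image, Finset.mem_coe]
    constructor
    · rintro ⟨hlen, hadm, h0, h1, hp, hl⟩
      refine ⟨Gmap n k s, Finset.mem_powersetCard.mpr
        ⟨Gmap_subset, Gmap_card hn hk hkn hlen hadm h1 hp⟩, ?_⟩
      exact Fmap_Gmap hn hk hkn hlen hadm h0 h1 hp hl
    · rintro ⟨S, hS, rfl⟩
      obtain ⟨hSsub, hScard⟩ := Finset.mem_powersetCard.mp hS
      exact Fmap_mem hn hk hkn hSsub hScard
  rw [himg, Set.ncard_image_of_injOn (fun S hS S' hS' h =>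
      Fmap_inj hn hk hkn (by simpa using hS) (by simpa using hS') h),
    Set.ncard_coe_finset, Finset.card_powersetCard, Nat.card_Ico,
    show n - 2 - 1 = n - 3 by omega]
end

section
/- For integers n ≥ 4 and 2 ≤ k ≤ n−1, the number of admissible tuples (s_1, …, s_n) of length n with center k satisfying s_1 = 1, s_2 = 1, s_{n−1} = 1 and s_n = 0 equals the binomial coefficient C(n−3, k−2). -/
/-- The integer value of the `t`-th entry of the tuple encoded by the step set `T`. -/
def gZ (k : ℕ) (T : Finset ℕ) : ℕ → ℤ
  | 0 => 1
  | (t+1) => gZ k T t +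
      (if t = 0 then 0 else if t < k - 1 then (if t ∈ T then 1 else 0)
       else (if t ∈ T then 0 else -1))

def enc (n k : ℕ) (T : Finset ℕ) : List ℕ :=
  List.ofFn (n := n) fun i => (gZ k T i).toNat

lemma gZ_eq (k : ℕ) (hk : 2 ≤ k) (T : Finset ℕ) : ∀ t,
    gZ k T t = 1 + ((T ∩ Finset.Ico 1 (min t (k-1))).card : ℤ)
      - ((Finset.Ico (k-1) t \ T).card : ℤ) := by
  intro t
  induction t with
  | zero => simp [gZ, show min 0 (k-1) = 0 by omega]
  | succ t ih =>
    rcases Nat.eq_zero_or_pos t with rfl | ht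
    · simp [gZ, show min 1 (k-1) = 1 by omega,
        Finset.Ico_eq_empty (show ¬ (k-1) < 1 by omega), Finset.Ico_self]
    by_cases htk : t < k - 1
    · have h1 : min t (k-1) = t := by omega
      have h2 : min (t+1) (k-1) = t+1 := by omega
      have h3 : Finset.Ico (k-1) t = (∅ : Finset ℕ) := Finset.Ico_eq_empty (by omega)
      have h4 : Finset.Ico (k-1) (t+1) = (∅ : Finset ℕ) := Finset.Ico_eq_empty (by omega)
      have h5 : Finset.Ico 1 (t+1) = insert t (Finset.Ico 1 t) :=
        Nat.Ico_succ_right_eq_insert_Ico (by omega)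
      rw [gZ, ih, h1, h2, h3, h4, h5]
      by_cases hmem : t ∈ T
      · rw [Finset.inter_insert_of_mem hmem,
          Finset.card_insert_of_notMem (by simp)]
        simp [show t ≠ 0 by omega, htk, hmem]; push_cast; ring
      · rw [Finset.inter_insert_of_notMem hmem]
        simp [show t ≠ 0 by omega, htk, hmem]
    · have h1 : min t (k-1) = k-1 := by omega
      have h2 : min (t+1) (k-1) = k-1 := by omega
      have h5 : Finset.Ico (k-1) (t+1) = insert t (Finset.Ico (k-1) t) :=
        Nat.Ico_succ_right_eq_insert_Ico (by omega)
      rw [gZ, ih, h1, h2, h5]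
      by_cases hmem : t ∈ T
      · rw [Finset.insert_sdiff_of_mem _ hmem]
        simp [show t ≠ 0 by omega, htk, hmem]
      · rw [Finset.insert_sdiff_of_notMem _ hmem,
          Finset.card_insert_of_notMem (by simp)]
        simp [show t ≠ 0 by omega, htk, hmem]; push_cast; ring

lemma card_fact {n k : ℕ} (hn : 4 ≤ n) (hk : 2 ≤ k) (hkn : k ≤ n - 1)
    {T : Finset ℕ} (hT : T ⊆ Finset.Ico 1 (n-2)) (hc : T.card = n-1-k) :
    ((Finset.Ico (k-1) (n-2)) \ T).card = (T ∩ Finset.Ico 1 (k-1)).card := by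
  have h1 := Finset.card_sdiff_add_card_inter (Finset.Ico (k-1) (n-2)) T
  have hU : Finset.Ico 1 (k-1) ∪ Finset.Ico (k-1) (n-2) = Finset.Ico 1 (n-2) :=
    Finset.Ico_union_Ico_eq_Ico (by omega) (by omega)
  have h2 : (T ∩ Finset.Ico 1 (k-1)).card + (T ∩ Finset.Ico (k-1) (n-2)).card
      = T.card := by
    rw [← Finset.card_union_of_disjoint
        (Finset.disjoint_of_subset_left (Finset.inter_subset_right)
          (Finset.disjoint_of_subset_right Finset.inter_subset_right
            (Finset.Ico_disjoint_Ico_consecutive 1 (k-1) (n-2)))),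
      ← Finset.inter_union_distrib_left, hU, Finset.inter_eq_left.mpr hT]
  have h3 : (Finset.Ico (k-1) (n-2)).card = n-1-k := by rw [Nat.card_Ico]; omega
  have h4 : (Finset.Ico (k-1) (n-2) ∩ T).card = (T ∩ Finset.Ico (k-1) (n-2)).card := by
    rw [Finset.inter_comm]
  omega

lemma gZ_pos {n k : ℕ} (hn : 4 ≤ n) (hk : 2 ≤ k) (hkn : k ≤ n - 1)
    {T : Finset ℕ} (hT : T ⊆ Finset.Ico 1 (n-2)) (hc : T.card = n-1-k) :
    ∀ t ≤ n-2, 1 ≤ gZ k T t := by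
  intro t ht
  rw [gZ_eq k hk T t]
  by_cases h : t ≤ k-1
  · rw [Finset.Ico_eq_empty (show ¬ (k-1) < t by omega)]
    simp
  · have hsub : Finset.Ico (k-1) t \ T ⊆ Finset.Ico (k-1) (n-2) \ T :=
      Finset.sdiff_subset_sdiff (Finset.Ico_subset_Ico le_rfl (by omega)) le_rfl
    have hle := Finset.card_le_card hsub
    rw [card_fact hn hk hkn hT hc] at hle
    have h1 : min t (k-1) = k-1 := by omega
    rw [h1]
    omega

lemma gZ_top {n k : ℕ} (hn : 4 ≤ n) (hk : 2 ≤ k) (hkn : k ≤ n - 1)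
    {T : Finset ℕ} (hT : T ⊆ Finset.Ico 1 (n-2)) (hc : T.card = n-1-k) :
    gZ k T (n-2) = 1 ∧ gZ k T (n-1) = 0 := by
  have h1 : gZ k T (n-2) = 1 := by
    rw [gZ_eq k hk T (n-2), show min (n-2) (k-1) = k-1 by omega,
      card_fact hn hk hkn hT hc]
    ring
  refine ⟨h1, ?_⟩
  have hstep : n - 1 = (n-2) + 1 := by omega
  rw [hstep, gZ, h1]
  have hmem : n - 2 ∉ T := fun h => by
    have := Finset.mem_Ico.mp (hT h); omega
  simp [show n - 2 ≠ 0 by omega, show ¬ (n-2 < k-1) by omega, hmem]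

lemma enc_getD {n k : ℕ} (T : Finset ℕ) {i : ℕ} (hi : i < n) :
    (enc n k T).getD i 0 = (gZ k T i).toNat := by
  rw [enc, List.getD_eq_getElem _ _ (by simpa using hi), List.getElem_ofFn]

lemma enc_length (n k : ℕ) (T : Finset ℕ) : (enc n k T).length = n :=
  List.length_ofFn

lemma enc_mem {n k : ℕ} (hn : 4 ≤ n) (hk : 2 ≤ k) (hkn : k ≤ n - 1)
    {T : Finset ℕ} (hT : T ⊆ Finset.Ico 1 (n-2)) (hc : T.card = n-1-k) :
    (enc n k T).length = n ∧ AdmissibleCenter k (enc n k T) ∧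
      (enc n k T).getD 0 0 = 1 ∧ (enc n k T).getD 1 0 = 1 ∧
      (enc n k T).getD (n - 2) 0 = 1 ∧ (enc n k T).getD (n - 1) 0 = 0 := by
  obtain ⟨htop, hlast⟩ := gZ_top hn hk hkn hT hc
  have h0 : (enc n k T).getD 0 0 = 1 := by
    rw [enc_getD T (show 0 < n by omega)]; simp [gZ]
  have h1v : gZ k T 1 = 1 := by simp [gZ]
  have h1 : (enc n k T).getD 1 0 = 1 := by
    rw [enc_getD T (show 1 < n by omega), h1v]; rfl
  have hn2 : (enc n k T).getD (n-2) 0 = 1 := by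
    rw [enc_getD T (show n-2 < n by omega), htop]; rfl
  have hn1 : (enc n k T).getD (n-1) 0 = 0 := by
    rw [enc_getD T (show n-1 < n by omega), hlast]; rfl
  refine ⟨enc_length n k T, ⟨?_, ?_, ?_, ?_⟩, h0, h1, hn2, hn1⟩
  · intro l hl hlk
    have hln : l < n := by omega
    have hl1n : l - 1 < n := by omega
    rw [enc_getD T hln, enc_getD T hl1n]
    have hstep : l = (l-1) + 1 := by omega
    have : gZ k T l = gZ k T (l-1) +
        (if l-1 = 0 then 0 else if l-1 < k - 1 then (if l-1 ∈ T then 1 else 0)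
         else (if l-1 ∈ T then 0 else -1)) := by
      conv_lhs => rw [hstep, gZ]
    rcases Nat.eq_zero_or_pos (l-1) with h | h
    · rw [h] at this ⊢; simp at this; rw [this]; omega
    · rw [if_neg (by omega), if_pos (by omega : l - 1 < k - 1)] at this
      by_cases hmem : l-1 ∈ T <;> simp [hmem] at this <;> rw [this] <;> omega
  · intro l hl hllen
    rw [enc_length] at hllen
    have hln : l < n := hllen
    have hl1n : l - 1 < n := by omega
    rw [enc_getD T hln, enc_getD T hl1n]
    have hstep : l = (l-1) + 1 := by omega
    have : gZ k T l = gZ k T (l-1) +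
        (if l-1 = 0 then 0 else if l-1 < k - 1 then (if l-1 ∈ T then 1 else 0)
         else (if l-1 ∈ T then 0 else -1)) := by
      conv_lhs => rw [hstep, gZ]
    rw [if_neg (by omega), if_neg (by omega)] at this
    by_cases hmem : l-1 ∈ T <;> simp [hmem] at this <;> rw [this] <;> omega
  · rw [h0]
  · rw [enc_length, hn1]; omega


def dec (n k : ℕ) (s : List ℕ) : Finset ℕ :=
  (Finset.Ico 1 (n-2)).filter
    (fun t => if t < k-1 then s.getD (t+1) 0 = s.getD t 0 + 1
     else s.getD (t+1) 0 = s.getD t 0)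

lemma card_split {n k : ℕ} (hn : 4 ≤ n) (hk : 2 ≤ k) (hkn : k ≤ n - 1)
    {T : Finset ℕ} (hT : T ⊆ Finset.Ico 1 (n-2)) :
    (Finset.Ico (k-1) (n-2) \ T).card + (T ∩ Finset.Ico (k-1) (n-2)).card = n-1-k ∧
    (T ∩ Finset.Ico 1 (k-1)).card + (T ∩ Finset.Ico (k-1) (n-2)).card = T.card := by
  constructor
  · have h1 := Finset.card_sdiff_add_card_inter (Finset.Ico (k-1) (n-2)) T
    have h3 : (Finset.Ico (k-1) (n-2)).card = n-1-k := by rw [Nat.card_Ico]; omega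
    have h4 : (Finset.Ico (k-1) (n-2) ∩ T).card = (T ∩ Finset.Ico (k-1) (n-2)).card := by
      rw [Finset.inter_comm]
    omega
  · have hU : Finset.Ico 1 (k-1) ∪ Finset.Ico (k-1) (n-2) = Finset.Ico 1 (n-2) :=
      Finset.Ico_union_Ico_eq_Ico (by omega) (by omega)
    rw [← Finset.card_union_of_disjoint
        (Finset.disjoint_of_subset_left (Finset.inter_subset_right)
          (Finset.disjoint_of_subset_right Finset.inter_subset_right
            (Finset.Ico_disjoint_Ico_consecutive 1 (k-1) (n-2)))),
      ← Finset.inter_union_distrib_left, hU, Finset.inter_eq_left.mpr hT]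

lemma dec_enc {n k : ℕ} (hn : 4 ≤ n) (hk : 2 ≤ k) (hkn : k ≤ n - 1)
    {T : Finset ℕ} (hT : T ⊆ Finset.Ico 1 (n-2)) (hc : T.card = n-1-k) :
    dec n k (enc n k T) = T := by
  ext t
  simp only [dec, Finset.mem_filter]
  constructor
  · rintro ⟨ht, hcond⟩
    rw [Finset.mem_Ico] at ht
    have hp1 : 1 ≤ gZ k T t := gZ_pos hn hk hkn hT hc t (by omega)
    have hp2 : 1 ≤ gZ k T (t+1) := gZ_pos hn hk hkn hT hc (t+1) (by omega)
    rw [enc_getD T (show t+1 < n by omega), enc_getD T (show t < n by omega)] at hcond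
    have hstep : gZ k T (t+1) = gZ k T t +
        (if t = 0 then 0 else if t < k - 1 then (if t ∈ T then 1 else 0)
         else (if t ∈ T then 0 else -1)) := by rw [gZ]
    rw [if_neg (show t ≠ 0 by omega)] at hstep
    by_cases htk : t < k-1
    · rw [if_pos htk] at hstep
      rw [if_pos htk] at hcond
      by_contra hmem
      rw [if_neg hmem] at hstep
      omega
    · rw [if_neg htk] at hstep
      rw [if_neg htk] at hcond
      by_contra hmem
      rw [if_neg hmem] at hstep
      omega
  · intro hmem
    have ht := Finset.mem_Ico.mp (hT hmem)
    have hp1 : 1 ≤ gZ k T t := gZ_pos hn hk hkn hT hc t (by omega)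
    refine ⟨Finset.mem_Ico.mpr ht, ?_⟩
    rw [enc_getD T (show t+1 < n by omega), enc_getD T (show t < n by omega)]
    have hstep : gZ k T (t+1) = gZ k T t +
        (if t = 0 then 0 else if t < k - 1 then (if t ∈ T then 1 else 0)
         else (if t ∈ T then 0 else -1)) := by rw [gZ]
    rw [if_neg (show t ≠ 0 by omega), if_pos hmem, if_pos hmem] at hstep
    by_cases htk : t < k-1
    · rw [if_pos htk] at hstep ⊢
      omega
    · rw [if_neg htk] at hstep ⊢
      omega

lemma dec_gZ {n k : ℕ} (hn : 4 ≤ n) (hk : 2 ≤ k) (hkn : k ≤ n - 1)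
    {s : List ℕ} (hlen : s.length = n) (hA : AdmissibleCenter k s)
    (h0 : s.getD 0 0 = 1) (h1 : s.getD 1 0 = 1)
    (h2 : s.getD (n-2) 0 = 1) (h3 : s.getD (n-1) 0 = 0) :
    ∀ i ≤ n-1, gZ k (dec n k s) i = (s.getD i 0 : ℤ) := by
  intro i hi
  induction i with
  | zero => rw [gZ, h0]; norm_num
  | succ i ih =>
    have ih' := ih (by omega)
    have hstep : gZ k (dec n k s) (i+1) = gZ k (dec n k s) i +
        (if i = 0 then 0 else if i < k - 1 then (if i ∈ dec n k s then 1 else 0)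
         else (if i ∈ dec n k s then 0 else -1)) := by rw [gZ]
    rcases Nat.eq_zero_or_pos i with rfl | hipos
    · rw [if_pos rfl] at hstep
      rw [hstep, ih', h0, h1]; norm_num
    rw [if_neg (by omega)] at hstep
    have hmem_iff : i ∈ dec n k s ↔ (1 ≤ i ∧ i < n-2) ∧
        (if i < k-1 then s.getD (i+1) 0 = s.getD i 0 + 1
         else s.getD (i+1) 0 = s.getD i 0) := by
      simp [dec, Finset.mem_filter, Finset.mem_Ico]
    by_cases htk : i < k-1
    · rw [if_pos htk] at hstep
      have hadm := hA.1 (i+1) (by omega) (by omega)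
      simp only [Nat.add_sub_cancel] at hadm
      have hiIco : 1 ≤ i ∧ i < n-2 := by omega
      by_cases hc : s.getD (i+1) 0 = s.getD i 0 + 1
      · rw [if_pos (hmem_iff.mpr ⟨hiIco, by rw [if_pos htk]; exact hc⟩)] at hstep
        rw [hstep, ih', hc]; push_cast; ring
      · have hmem : i ∉ dec n k s := fun h => hc (by
          have := (hmem_iff.mp h).2; rwa [if_pos htk] at this)
        rw [if_neg hmem] at hstep
        rw [hstep, ih']
        have : s.getD (i+1) 0 = s.getD i 0 := by omega
        rw [this]; ring
    · rw [if_neg htk] at hstep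
      have hilen : i + 1 < s.length := by rw [hlen]; omega
      have hadm := hA.2.1 (i+1) (by omega) hilen
      simp only [Nat.add_sub_cancel] at hadm
      by_cases hin2 : i = n-2
      · subst hin2
        have hmem : n-2 ∉ dec n k s := fun h => by
          have := (hmem_iff.mp h).1; omega
        rw [if_neg hmem] at hstep
        rw [hstep, ih', h2, show n - 2 + 1 = n - 1 by omega, h3]
        norm_num
      · have hiIco : 1 ≤ i ∧ i < n-2 := by omega
        by_cases hc : s.getD (i+1) 0 = s.getD i 0
        · rw [if_pos (hmem_iff.mpr ⟨hiIco, by rw [if_neg htk]; exact hc⟩)] at hstep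
          rw [hstep, ih', hc]; ring
        · have hmem : i ∉ dec n k s := fun h => hc (by
            have := (hmem_iff.mp h).2; rwa [if_neg htk] at this)
          rw [if_neg hmem] at hstep
          rw [hstep, ih']
          omega

lemma dec_card {n k : ℕ} (hn : 4 ≤ n) (hk : 2 ≤ k) (hkn : k ≤ n - 1)
    {s : List ℕ} (hlen : s.length = n) (hA : AdmissibleCenter k s)
    (h0 : s.getD 0 0 = 1) (h1 : s.getD 1 0 = 1)
    (h2 : s.getD (n-2) 0 = 1) (h3 : s.getD (n-1) 0 = 0) :
    (dec n k s).card = n-1-k := by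
  have hT : dec n k s ⊆ Finset.Ico 1 (n-2) := Finset.filter_subset _ _
  have hg := dec_gZ hn hk hkn hlen hA h0 h1 h2 h3 (n-2) (by omega)
  rw [gZ_eq k hk _ (n-2), show min (n-2) (k-1) = k-1 by omega, h2] at hg
  have hd : (Finset.Ico (k-1) (n-2) \ dec n k s).card
      = (dec n k s ∩ Finset.Ico 1 (k-1)).card := by omega
  obtain ⟨hc1, hc2⟩ := card_split hn hk hkn hT
  omega

lemma enc_dec {n k : ℕ} (hn : 4 ≤ n) (hk : 2 ≤ k) (hkn : k ≤ n - 1)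
    {s : List ℕ} (hlen : s.length = n) (hA : AdmissibleCenter k s)
    (h0 : s.getD 0 0 = 1) (h1 : s.getD 1 0 = 1)
    (h2 : s.getD (n-2) 0 = 1) (h3 : s.getD (n-1) 0 = 0) :
    enc n k (dec n k s) = s := by
  apply List.ext_getElem (by rw [enc_length, hlen])
  intro i hi1 hi2
  have hin : i < n := by rwa [enc_length] at hi1
  have hg := dec_gZ hn hk hkn hlen hA h0 h1 h2 h3 i (by omega)
  have := enc_getD (n := n) (k := k) (dec n k s) hin
  rw [List.getD_eq_getElem _ _ hi1] at this
  rw [this, hg, Int.toNat_natCast, List.getD_eq_getElem _ _ hi2]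

/-- For `n ≥ 4` and `2 ≤ k ≤ n-1`, the number of admissible tuples
`(s 1, …, s n)` of length `n` with center `k` satisfying
`s 1 = 1`, `s 2 = 1`, `s (n-1) = 1`, `s n = 0` is `C(n-3, k-2)`. -/
theorem card_admissible_tuples_boundary₂ (n k : ℕ) (hn : 4 ≤ n)
    (hk : 2 ≤ k) (hkn : k ≤ n - 1) :
    {s : List ℕ | s.length = n ∧ AdmissibleCenter k s ∧
      s.getD 0 0 = 1 ∧ s.getD 1 0 = 1 ∧
      s.getD (n - 2) 0 = 1 ∧ s.getD (n - 1) 0 = 0}.ncard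
      = Nat.choose (n - 3) (k - 2) := by
  have hset : {s : List ℕ | s.length = n ∧ AdmissibleCenter k s ∧
      s.getD 0 0 = 1 ∧ s.getD 1 0 = 1 ∧
      s.getD (n - 2) 0 = 1 ∧ s.getD (n - 1) 0 = 0}
      = enc n k '' ↑(Finset.powersetCard (n-1-k) (Finset.Ico 1 (n-2))) := by
    ext s
    constructor
    · rintro ⟨hlen, hA, h0, h1, h2, h3⟩
      refine ⟨dec n k s, ?_, enc_dec hn hk hkn hlen hA h0 h1 h2 h3⟩
      simp only [Finset.mem_coe, Finset.mem_powersetCard]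
      exact ⟨Finset.filter_subset _ _, dec_card hn hk hkn hlen hA h0 h1 h2 h3⟩
    · rintro ⟨T, hT, rfl⟩
      simp only [Finset.mem_coe, Finset.mem_powersetCard] at hT
      exact enc_mem hn hk hkn hT.1 hT.2
  have hinj : Set.InjOn (enc n k)
      ↑(Finset.powersetCard (n-1-k) (Finset.Ico 1 (n-2))) := by
    intro T hT T' hT' h
    simp only [Finset.mem_coe, Finset.mem_powersetCard] at hT hT'
    rw [← dec_enc hn hk hkn hT.1 hT.2, h, dec_enc hn hk hkn hT'.1 hT'.2]
  rw [hset, Set.ncard_image_of_injOn hinj, Set.ncard_coe_finset,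
    Finset.card_powersetCard, Nat.card_Ico,
    show n - 2 - 1 = n - 3 by omega, show n - 1 - k = n - 3 - (k - 2) by omega,
    Nat.choose_symm (by omega : k - 2 ≤ n - 3)]
end

section
/- Let c ∈ ℂ and let (y_1, y_2) ∈ (ℂ∖{0})². Then the pair of equations 1 − y_1^{−2}y_2^{−1} + y_2^{−1} = 0 and 1 − y_1^{−1}y_2^{−2} − c·y_2^{−2} − y_1·y_2^{−2} = 0 holds if and only if y_2^{−1}·(y_1^{−2} − 1) = 1 and y_1^{5} + (c − 1)·y_1^{4} + y_1^{3} + 2·y_1^{2} − 1 = 0. -/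
/-- The simplification of the critical point equations in Section 3.4: for
`c ∈ ℂ` and nonzero `y₁, y₂ ∈ ℂ`, the system
`1 - y₁⁻²y₂⁻¹ + y₂⁻¹ = 0` and `1 - y₁⁻¹y₂⁻² - c y₂⁻² - y₁ y₂⁻² = 0`
holds iff `y₂⁻¹(y₁⁻² - 1) = 1` and
`y₁⁵ + (c-1)y₁⁴ + y₁³ + 2y₁² - 1 = 0`. -/
theorem critical_point_equations_simplification
    (c y₁ y₂ : ℂ) (h₁ : y₁ ≠ 0) (h₂ : y₂ ≠ 0) :
    (1 - (y₁ ^ 2)⁻¹ * y₂⁻¹ + y₂⁻¹ = 0 ∧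
      1 - y₁⁻¹ * (y₂ ^ 2)⁻¹ - c * (y₂ ^ 2)⁻¹ - y₁ * (y₂ ^ 2)⁻¹ = 0) ↔
    (y₂⁻¹ * ((y₁ ^ 2)⁻¹ - 1) = 1 ∧
      y₁ ^ 5 + (c - 1) * y₁ ^ 4 + y₁ ^ 3 + 2 * y₁ ^ 2 - 1 = 0) := by
  constructor
  · rintro ⟨e1, e2⟩
    field_simp at e1 e2
    have p : y₁ ^ 2 * y₂ - (1 - y₁ ^ 2) = 0 := by
      apply mul_left_cancel₀ h₂; linear_combination y₂ * e1
    have q : y₁ * y₂ ^ 2 - c * y₁ - y₁ ^ 2 - 1 = 0 := by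
      apply mul_left_cancel₀ (pow_ne_zero 4 h₂); linear_combination y₂ ^ 4 * e2
    constructor
    · field_simp
      linear_combination -p
    · linear_combination (y₁ ^ 2 * y₂ + 1 - y₁ ^ 2) * p - y₁ ^ 3 * q
  · rintro ⟨e1, e2⟩
    field_simp at e1
    have p : y₁ ^ 2 * y₂ - (1 - y₁ ^ 2) = 0 := by linear_combination -e1
    constructor
    · field_simp
      linear_combination p
    · field_simp
      have q : y₁ * y₂ ^ 2 - c * y₁ - y₁ ^ 2 - 1 = 0 := by
        apply mul_left_cancel₀ (pow_ne_zero 3 h₁)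
        linear_combination (y₁ ^ 2 * y₂ + 1 - y₁ ^ 2) * p - e2
      linear_combination q
end

section
/- The complex polynomial p(y) = y^5 + 2y^4 + y^3 + 2y^2 − 1 has five distinct roots in ℂ, and no root of p equals 1 or −1. Consequently, the system of equations y_2^{−1}(y_1^{−2} − 1) = 1 and y_1^{5} + 2y_1^{4} + y_1^{3} + 2y_1^{2} − 1 = 0 has exactly five solutions (y_1, y_2) ∈ (ℂ∖{0})². -/
open Polynomial

noncomputable def Pq : ℂ[X] := X ^ 5 + 2 * X ^ 4 + X ^ 3 + 2 * X ^ 2 - 1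

lemma Pq_natDegree : Pq.natDegree = 5 := by
  unfold Pq; compute_degree!

lemma Pq_ne_zero : Pq ≠ 0 := by
  intro h
  have := Pq_natDegree
  rw [h] at this
  simp at this

lemma Pq_deriv : Pq.derivative = 5 * X ^ 4 + 8 * X ^ 3 + 3 * X ^ 2 + 4 * X := by
  unfold Pq
  simp [derivative_pow, map_ofNat]
  ring

lemma Pq_sep : Pq.Separable := by
  rw [Polynomial.Separable, Pq_deriv]
  refine ⟨C (-475375 : ℂ)⁻¹ * (334750 * X ^ 3 + 334100 * X ^ 2 + 138200 * X + 475375),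
    C (-475375 : ℂ)⁻¹ * (-66950 * X ^ 4 - 93600 * X ^ 3 - 38300 * X ^ 2 - 180075 * X + 34550), ?_⟩
  have key : (334750 * X ^ 3 + 334100 * X ^ 2 + 138200 * X + 475375) * Pq +
      (-66950 * X ^ 4 - 93600 * X ^ 3 - 38300 * X ^ 2 - 180075 * X + 34550) *
        (5 * X ^ 4 + 8 * X ^ 3 + 3 * X ^ 2 + 4 * X) = C (-475375 : ℂ) := by
    unfold Pq
    rw [map_neg, map_ofNat]
    ring
  have : C (-475375 : ℂ)⁻¹ * ((334750 * X ^ 3 + 334100 * X ^ 2 + 138200 * X + 475375) * Pq +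
      (-66950 * X ^ 4 - 93600 * X ^ 3 - 38300 * X ^ 2 - 180075 * X + 34550) *
        (5 * X ^ 4 + 8 * X ^ 3 + 3 * X ^ 2 + 4 * X)) = 1 := by
    rw [key, ← C_mul, inv_mul_cancel₀ (by norm_num)]
    simp
  rw [← this]; ring

lemma eval_Pq (y : ℂ) : Pq.eval y = y ^ 5 + 2 * y ^ 4 + y ^ 3 + 2 * y ^ 2 - 1 := by
  simp [Pq]

lemma root_set_eq :
    {y : ℂ | y ^ 5 + 2 * y ^ 4 + y ^ 3 + 2 * y ^ 2 - 1 = 0} = ↑Pq.roots.toFinset := by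
  ext y
  simp [Polynomial.mem_roots, Pq_ne_zero, Polynomial.IsRoot, eval_Pq, Set.mem_setOf_eq]

lemma cardRootsFive : {y : ℂ | y ^ 5 + 2 * y ^ 4 + y ^ 3 + 2 * y ^ 2 - 1 = 0}.ncard = 5 := by
  rw [root_set_eq, Set.ncard_coe_finset,
    Multiset.toFinset_card_of_nodup (Pq.nodup_roots Pq_sep)]
  have h := Polynomial.Splits.natDegree_eq_card_roots
    (IsAlgClosed.splits Pq)
  rw [← h, Pq_natDegree]

lemma not_pm_one (y : ℂ) (h : y ^ 5 + 2 * y ^ 4 + y ^ 3 + 2 * y ^ 2 - 1 = 0) :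
    y ≠ 1 ∧ y ≠ -1 := by
  constructor <;> rintro rfl <;> norm_num at h

/-- The polynomial `y⁵ + 2y⁴ + y³ + 2y² - 1` has five distinct complex roots,
none of which equals `1` or `-1`; consequently the system
`y₂⁻¹(y₁⁻² - 1) = 1`, `y₁⁵ + 2y₁⁴ + y₁³ + 2y₁² - 1 = 0` has exactly five
solutions `(y₁, y₂) ∈ (ℂ∖{0})²`. -/
theorem five_solutions_bulk_deformed :
    {y : ℂ | y ^ 5 + 2 * y ^ 4 + y ^ 3 + 2 * y ^ 2 - 1 = 0}.ncard = 5 ∧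
    (∀ y : ℂ, y ^ 5 + 2 * y ^ 4 + y ^ 3 + 2 * y ^ 2 - 1 = 0 → y ≠ 1 ∧ y ≠ -1) ∧
    {p : ℂ × ℂ | p.1 ≠ 0 ∧ p.2 ≠ 0 ∧
      p.2⁻¹ * ((p.1 ^ 2)⁻¹ - 1) = 1 ∧
      p.1 ^ 5 + 2 * p.1 ^ 4 + p.1 ^ 3 + 2 * p.1 ^ 2 - 1 = 0}.ncard = 5 := by
  refine ⟨cardRootsFive, not_pm_one, ?_⟩
  have himg : {p : ℂ × ℂ | p.1 ≠ 0 ∧ p.2 ≠ 0 ∧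
      p.2⁻¹ * ((p.1 ^ 2)⁻¹ - 1) = 1 ∧
      p.1 ^ 5 + 2 * p.1 ^ 4 + p.1 ^ 3 + 2 * p.1 ^ 2 - 1 = 0} =
      (fun y : ℂ => (y, (y ^ 2)⁻¹ - 1)) ''
        {y : ℂ | y ^ 5 + 2 * y ^ 4 + y ^ 3 + 2 * y ^ 2 - 1 = 0} := by
    ext ⟨y₁, y₂⟩
    simp only [Set.mem_setOf_eq, Set.mem_image, Prod.mk.injEq]
    constructor
    · rintro ⟨h1, h2, h3, h4⟩
      refine ⟨y₁, h4, rfl, ?_⟩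
      field_simp at h3 ⊢
      linear_combination h3
    · rintro ⟨y, hy, rfl, rfl⟩
      have hne := not_pm_one y hy
      have hy0 : y ≠ 0 := by rintro rfl; norm_num at hy
      have hsq : y ^ 2 ≠ 1 := by
        intro h
        rcases mul_eq_zero.mp (show (y - 1) * (y + 1) = 0 by linear_combination h) with h1 | h1
        · exact hne.1 (sub_eq_zero.mp h1)
        · exact hne.2 (eq_neg_of_add_eq_zero_left h1)
      have hy2 : (y ^ 2)⁻¹ - 1 ≠ 0 := by
        intro h
        apply hsq
        have : (y ^ 2)⁻¹ = 1 := by linear_combination h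
        field_simp at this
        exact this.symm
      exact ⟨hy0, hy2, inv_mul_cancel₀ hy2, hy⟩
  rw [himg, Set.ncard_image_of_injective _ (fun a b h => (Prod.mk.injEq _ _ _ _ ▸ h).1),
    cardRootsFive]
end
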